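/- In the education signaling game specified in the context, the strategy profile in which both worker types choose C with probability 1 and the employer pays med after every signal (π₂(med|N) = π₂(med|C) = π₂(med|D) = 1) is a uniform rationality-compatible equilibrium (uRCE). -/

import Mathlib

open scoped Classical
open Finset Filter

noncomputable section

/-- `p` is a probability distribution on the finite type `X`. -/
def IsDist {X : Type*} [Fintype X] (p : X → ℝ) : Prop :=
  (∀ x, 0 ≤ p x) ∧ ∑ x, p x = 1

variable {Θ S A : Type*} [Fintype Θ] [Fintype S] [Fintype A]

/-- Sender's expected payoff `u₁(θ, s, π₂(·|s))` from signal `s` when the receiver plays `π₂`. -/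
def u1R (u₁ : Θ → S → A → ℝ) (π₂ : S → A → ℝ) (θ : Θ) (s : S) : ℝ :=
  ∑ a, π₂ s a * u₁ θ s a

/-- Receiver's expected payoff of action `a` after signal `s` under belief `p`. -/
def expU2 (u₂ : Θ → S → A → ℝ) (p : Θ → ℝ) (s : S) (a : A) : ℝ :=
  ∑ θ, p θ * u₂ θ s a

/-- `BR(p, s)`: pure best responses to belief `p` after signal `s`. -/
def BRb (u₂ : Θ → S → A → ℝ) (p : Θ → ℝ) (s : S) : Set A :=
  {a | ∀ a', expU2 u₂ p s a' ≤ expU2 u₂ p s a}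

/-- `A_s^BR`: actions that best respond to some belief after `s`. -/
def ABR (u₂ : Θ → S → A → ℝ) (s : S) : Set A :=
  {a | ∃ p, IsDist p ∧ a ∈ BRb u₂ p s}

/-- Membership in `Π₂•`: a receiver behavior strategy supported on `A_s^BR` after every `s`. -/
def Rational2 (u₂ : Θ → S → A → ℝ) (π₂ : S → A → ℝ) : Prop :=
  (∀ s, IsDist (π₂ s)) ∧ ∀ s a, π₂ s a ≠ 0 → a ∈ ABR u₂ s

/-- `u₁(θ,s,π₂(·|s)) ≥ max_{s' ≠ s} u₁(θ,s',π₂(·|s'))`. -/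
def WeakBest (u₁ : Θ → S → A → ℝ) (π₂ : S → A → ℝ) (θ : Θ) (s : S) : Prop :=
  ∀ s', s' ≠ s → u1R u₁ π₂ θ s' ≤ u1R u₁ π₂ θ s

/-- `u₁(θ,s,π₂(·|s)) > max_{s' ≠ s} u₁(θ,s',π₂(·|s'))`. -/
def StrictBest (u₁ : Θ → S → A → ℝ) (π₂ : S → A → ℝ) (θ : Θ) (s : S) : Prop :=
  ∀ s', s' ≠ s → u1R u₁ π₂ θ s' < u1R u₁ π₂ θ s

/-- `θ' ≿_s θ''`: `s` is more rationally-compatible with `θ'` than with `θ''`. -/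
def MoreCompat (u₁ u₂ : Θ → S → A → ℝ) (s : S) (θ' θ'' : Θ) : Prop :=
  ∀ π₂, Rational2 u₂ π₂ → WeakBest u₁ π₂ θ'' s → StrictBest u₁ π₂ θ' s

/-- `s` maximizes `s' ↦ u₁(θ, s', π₂(·|s'))`. -/
def GlobalBest (u₁ : Θ → S → A → ℝ) (π₂ : S → A → ℝ) (θ : Θ) (s : S) : Prop :=
  ∀ s', u1R u₁ π₂ θ s' ≤ u1R u₁ π₂ θ s

/-- `S_θ`: signals that best respond to some (not necessarily rational) receiver strategy. -/
def Sθ (u₁ : Θ → S → A → ℝ) (θ : Θ) : Set S :=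
  {s | ∃ π₂ : S → A → ℝ, (∀ s', IsDist (π₂ s')) ∧ GlobalBest u₁ π₂ θ s}

/-- `Θ_s`: types for which `s` is not dominated. -/
def Θtypes (u₁ : Θ → S → A → ℝ) (s : S) : Set Θ := {θ | s ∈ Sθ u₁ θ}

/-- Membership in `Π₁•`. -/
def Rational1 (u₁ : Θ → S → A → ℝ) (π₁ : Θ → S → ℝ) : Prop :=
  (∀ θ, IsDist (π₁ θ)) ∧ ∀ θ s, π₁ θ s ≠ 0 → s ∈ Sθ u₁ θ

/-- Nash equilibrium of the signaling game. -/
def NashEq (lam : Θ → ℝ) (u₁ u₂ : Θ → S → A → ℝ)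
    (π₁ : Θ → S → ℝ) (π₂ : S → A → ℝ) : Prop :=
  (∀ θ, IsDist (π₁ θ)) ∧ (∀ s, IsDist (π₂ s)) ∧
  (∀ θ s, π₁ θ s ≠ 0 → GlobalBest u₁ π₂ θ s) ∧
  (∀ s, (∃ θ, π₁ θ s ≠ 0) → ∀ a, π₂ s a ≠ 0 →
    ∀ a', ∑ θ, lam θ * π₁ θ s * u₂ θ s a' ≤ ∑ θ, lam θ * π₁ θ s * u₂ θ s a)

/-- Equilibrium expected payoff `E_π[u₁ | θ]`. -/
def eqPayoff (u₁ : Θ → S → A → ℝ) (π₁ : Θ → S → ℝ) (π₂ : S → A → ℝ) (θ : Θ) : ℝ :=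
  ∑ s, π₁ θ s * u1R u₁ π₂ θ s

/-- `s` is off the path of play of `π₁`. -/
def OffPath (π₁ : Θ → S → ℝ) (s : S) : Prop := ∀ θ, π₁ θ s = 0

/-- `J̃(s, π)`: types for which some best response to `s` weakly improves on the equilibrium. -/
def Jt (u₁ u₂ : Θ → S → A → ℝ) (π₁ : Θ → S → ℝ) (π₂ : S → A → ℝ) (s : S) : Set Θ :=
  {θ | ∃ a ∈ ABR u₂ s, eqPayoff u₁ π₁ π₂ θ ≤ u₁ θ s a}

/-- The odds-ratio condition defining `P_{θ'▷θ''}`. -/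
def OddsLe (lam : Θ → ℝ) (θ' θ'' : Θ) (p : Θ → ℝ) : Prop :=
  p θ'' * lam θ' ≤ lam θ'' * p θ'

/-- `Δ(T)`: beliefs supported on `T`. -/
def DeltaOn {Θ : Type*} [Fintype Θ] (T : Set Θ) : Set (Θ → ℝ) :=
  {p | IsDist p ∧ ∀ θ ∉ T, p θ = 0}

/-- `P̃(s, π)`: rationality-compatible beliefs at profile `π`. -/
def Pt (lam : Θ → ℝ) (u₁ u₂ : Θ → S → A → ℝ) (π₁ : Θ → S → ℝ) (π₂ : S → A → ℝ)
    (s : S) : Set (Θ → ℝ) :=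
  if (Jt u₁ u₂ π₁ π₂ s).Nonempty then
    DeltaOn (Jt u₁ u₂ π₁ π₂ s) ∩
      {p | ∀ θ' θ'', MoreCompat u₁ u₂ s θ' θ'' → OddsLe lam θ' θ'' p}
  else DeltaOn (Θtypes u₁ s)

/-- Rationality-compatible equilibrium. -/
def RCE (lam : Θ → ℝ) (u₁ u₂ : Θ → S → A → ℝ)
    (π₁ : Θ → S → ℝ) (π₂ : S → A → ℝ) : Prop :=
  NashEq lam u₁ u₂ π₁ π₂ ∧
  ∀ s a, π₂ s a ≠ 0 → ∃ p ∈ Pt lam u₁ u₂ π₁ π₂ s, a ∈ BRb u₂ p s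

/-- `P̂(s)`: uniformly rationality-compatible beliefs. -/
def Ph (lam : Θ → ℝ) (u₁ u₂ : Θ → S → A → ℝ) (s : S) : Set (Θ → ℝ) :=
  DeltaOn (Θtypes u₁ s) ∩
    {p | ∀ θ' θ'', MoreCompat u₁ u₂ s θ' θ'' → OddsLe lam θ' θ'' p}

/-- Uniform rationality-compatible equilibrium. -/
def URCE (lam : Θ → ℝ) (u₁ u₂ : Θ → S → A → ℝ)
    (π₁ : Θ → S → ℝ) (π₂ : S → A → ℝ) : Prop :=
  NashEq lam u₁ u₂ π₁ π₂ ∧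
  ∀ θ s, OffPath π₁ s → ∀ a, (∃ p ∈ Ph lam u₁ u₂ s, a ∈ BRb u₂ p s) →
    u₁ θ s a ≤ eqPayoff u₁ π₁ π₂ θ

/-- Receiver's expected payoff of a mixed action `α` after `s` under belief `p`. -/
def expU2m (u₂ : Θ → S → A → ℝ) (p : Θ → ℝ) (s : S) (α : A → ℝ) : ℝ :=
  ∑ θ, p θ * ∑ a, α a * u₂ θ s a

/-- `MBR(p, s)`: mixed best responses to belief `p` after `s`. -/
def MBRb (u₂ : Θ → S → A → ℝ) (p : Θ → ℝ) (s : S) : Set (A → ℝ) :=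
  {α | IsDist α ∧ ∀ α', IsDist α' → expU2m u₂ p s α' ≤ expU2m u₂ p s α}

/-- `MBR(s)`. -/
def MBR (u₂ : Θ → S → A → ℝ) (s : S) : Set (A → ℝ) :=
  {α | ∃ p, IsDist p ∧ α ∈ MBRb u₂ p s}

/-- `u₁(θ, s, α)` for a mixed action `α`. -/
def u1m (u₁ : Θ → S → A → ℝ) (θ : Θ) (s : S) (α : A → ℝ) : ℝ :=
  ∑ a, α a * u₁ θ s a

/-- `D(θ, s; π)`. -/
def Dset (u₁ u₂ : Θ → S → A → ℝ) (π₁ : Θ → S → ℝ) (π₂ : S → A → ℝ)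
    (θ : Θ) (s : S) : Set (A → ℝ) :=
  {α | α ∈ MBR u₂ s ∧ eqPayoff u₁ π₁ π₂ θ < u1m u₁ θ s α}

/-- `D°(θ, s; π)`. -/
def D0set (u₁ u₂ : Θ → S → A → ℝ) (π₁ : Θ → S → ℝ) (π₂ : S → A → ℝ)
    (θ : Θ) (s : S) : Set (A → ℝ) :=
  {α | α ∈ MBR u₂ s ∧ eqPayoff u₁ π₁ π₂ θ = u1m u₁ θ s α}

/-! ### The education signaling game -/

/-- Worker types. -/
inductive Ty | H | L
deriving DecidableEq

instance : Fintype Ty := ⟨{Ty.H, Ty.L}, fun x => by cases x <;> simp⟩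

/-- Education levels (signals): None, College, Ph.D. -/
inductive Sg | N | C | D
deriving DecidableEq

instance : Fintype Sg := ⟨{Sg.N, Sg.C, Sg.D}, fun x => by cases x <;> simp⟩

/-- Wages (receiver actions). -/
inductive Ac | low | med | high
deriving DecidableEq

instance : Fintype Ac := ⟨{Ac.low, Ac.med, Ac.high}, fun x => by cases x <;> simp⟩

/-- Type distribution: both types equally likely. -/
def lamE : Ty → ℝ := fun _ => 1 / 2

/-- Wage utility. -/
def z : Ac → ℝ
  | .low => 0
  | .med => 6
  | .high => 9

/-- Consumption value of (ability, education). -/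
def v : Ty → Sg → ℝ
  | .H, .N => 0
  | .L, .N => 0
  | .H, .C => 2
  | .L, .C => 1
  | .H, .D => -2
  | .L, .D => -4

/-- Worker (sender) payoffs. -/
def u1E (θ : Ty) (s : Sg) (a : Ac) : ℝ := z a + v θ s

/-- Employer (receiver) payoffs. -/
def u2E : Ty → Sg → Ac → ℝ
  | .H, .N, .low => -2
  | .H, .N, .med => 0
  | .H, .N, .high => 1
  | .L, .N, .low => 1
  | .L, .N, .med => 0
  | .L, .N, .high => -2
  | .H, .C, .low => -1
  | .H, .C, .med => 1
  | .H, .C, .high => 2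
  | .L, .C, .low => 2
  | .L, .C, .med => 1
  | .L, .C, .high => -1
  | .H, .D, .low => 0
  | .H, .D, .med => 2
  | .H, .D, .high => 3
  | .L, .D, .low => 3
  | .L, .D, .med => 2
  | .L, .D, .high => 0

-- auxiliary lemmas to insert above the theorem
lemma sumTy (f : Ty → ℝ) : ∑ x, f x = f .H + f .L := by
  rw [show (Finset.univ : Finset Ty) = {Ty.H, Ty.L} from rfl]; simp

lemma sumSg (f : Sg → ℝ) : ∑ x, f x = f .N + f .C + f .D := by
  rw [show (Finset.univ : Finset Sg) = {Sg.N, Sg.C, Sg.D} from rfl]; simp; ring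

lemma sumAc (f : Ac → ℝ) : ∑ x, f x = f .low + f .med + f .high := by
  rw [show (Finset.univ : Finset Ac) = {Ac.low, Ac.med, Ac.high} from rfl]; simp; ring

lemma u1R_eq (π₂ : Sg → Ac → ℝ) (θ : Ty) (s : Sg) (h : IsDist (π₂ s)) :
    u1R u1E π₂ θ s = (∑ a, π₂ s a * z a) + v θ s := by
  unfold u1R u1E
  simp only [mul_add, Finset.sum_add_distrib, ← Finset.sum_mul, h.2, one_mul]

lemma mcNLH : MoreCompat u1E u2E Sg.N Ty.L Ty.H := by
  intro π₂ hπ hw s' hs'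
  have h1 := hw s' hs'
  rw [u1R_eq π₂ Ty.H s' (hπ.1 s'), u1R_eq π₂ Ty.H Sg.N (hπ.1 Sg.N)] at h1
  rw [u1R_eq π₂ Ty.L s' (hπ.1 s'), u1R_eq π₂ Ty.L Sg.N (hπ.1 Sg.N)]
  cases s' with
  | N => exact absurd rfl hs'
  | C => simp [v] at h1 ⊢; linarith
  | D => simp [v] at h1 ⊢; linarith

lemma u1R_med (θ : Ty) (s : Sg) :
    u1R u1E (fun _ a => if a = Ac.med then 1 else 0) θ s = 6 + v θ s := by
  unfold u1R u1E
  rw [sumAc]; simp [z]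

lemma eqP_eq (θ : Ty) :
    eqPayoff u1E (fun _ s => if s = Sg.C then 1 else 0)
      (fun _ a => if a = Ac.med then 1 else 0) θ = 6 + v θ Sg.C := by
  unfold eqPayoff
  rw [sumSg]; simp [u1R_med]

/-- in the education game, the profile where both worker types choose
College and the employer pays the medium wage after every signal is a uRCE. -/
theorem education_pooling_on_C_is_uRCE :
    URCE lamE u1E u2E
      (fun _ s => if s = Sg.C then 1 else 0)
      (fun _ a => if a = Ac.med then 1 else 0) := by
  constructor
  · refine ⟨?_, ?_, ?_, ?_⟩
    · intro θ
      exact ⟨fun s => by dsimp only; split <;> norm_num, by rw [sumSg]; simp⟩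
    · intro s
      exact ⟨fun a => by dsimp only; split <;> norm_num, by rw [sumAc]; simp⟩
    · intro θ s hs
      have hsC : s = Sg.C := by by_contra h; simp [h] at hs
      subst hsC
      intro s'
      rw [u1R_med, u1R_med]
      cases θ <;> cases s' <;> norm_num [v]
    · intro s hex a ha a'
      have hsC : s = Sg.C := by
        obtain ⟨θ, hθ⟩ := hex
        by_contra h; simp [h] at hθ
      have haM : a = Ac.med := by by_contra h; simp [h] at ha
      subst hsC; subst haM
      rw [sumTy, sumTy]
      cases a' <;> norm_num [lamE, u2E]
  · intro θ s hoff a hpe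
    obtain ⟨p, hp, hBR⟩ := hpe
    rw [eqP_eq]
    cases s with
    | C => have := hoff Ty.H; simp at this
    | D => cases θ <;> cases a <;> norm_num [u1E, z, v]
    | N =>
      have hodds : OddsLe lamE Ty.L Ty.H p := hp.2 Ty.L Ty.H mcNLH
      have hdist : IsDist p := hp.1.1
      have hsum : p Ty.H + p Ty.L = 1 := by rw [← sumTy p]; exact hdist.2
      have hle : p Ty.H ≤ p Ty.L := by
        unfold OddsLe lamE at hodds; linarith
      have hhigh : a ≠ Ac.high := by
        intro h; subst h
        have hm := hBR Ac.med
        unfold expU2 at hm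
        rw [sumTy, sumTy] at hm
        simp [u2E] at hm
        linarith
      cases θ <;> cases a <;> first | (exact absurd rfl hhigh) | norm_num [u1E, z, v]


end
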